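/- If q : ℝ → ℝ is a polynomial with q(0) = 0 and ∫_0^π q(x) cos(k x) dx = 1/k^{2n} for all positive integers k, then ∑_{k=1}^∞ 1/k^{2n} = −(1/2) ∫_0^π q(x) dx. -/

import Mathlib

open Polynomial MeasureTheory Filter Real Set Topology
open scoped FourierTransform

private lemma dirichlet_aux (N : ℕ) (x : ℝ) :
    2 * Real.sin (x / 2) * ∑ k ∈ Finset.range N, Real.cos (((k : ℝ) + 1) * x)
      = Real.sin (((N : ℝ) + 1 / 2) * x) - Real.sin (x / 2) := by
  induction N with
  | zero => simp; ring_nf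
  | succ N ih =>
    rw [Finset.sum_range_succ, mul_add, ih]
    have h := Real.sin_sub_sin (((N : ℝ) + 1 + 1 / 2) * x) (((N : ℝ) + 1 / 2) * x)
    have h1 : ((((N : ℝ) + 1 + 1 / 2) * x - ((N : ℝ) + 1 / 2) * x) / 2) = x / 2 := by ring
    have h2 : ((((N : ℝ) + 1 + 1 / 2) * x + ((N : ℝ) + 1 / 2) * x) / 2) = ((N : ℝ) + 1) * x := by
      ring
    rw [h1, h2] at h
    push_cast
    linarith

theorem sum_inv_pow_eq_neg_half_integral (n : ℕ) (hn : 0 < n) (q : Polynomial ℝ)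
    (hq0 : q.eval 0 = 0)
    (hq : ∀ k : ℕ, 0 < k →
      ∫ x in (0:ℝ)..Real.pi, q.eval x * Real.cos (k * x) = 1 / (k : ℝ) ^ (2 * n)) :
    ∑' k : ℕ, 1 / ((k : ℝ) + 1) ^ (2 * n)
      = -(1 / 2) * ∫ x in (0:ℝ)..Real.pi, q.eval x := by
  set f : ℝ → ℝ := fun x => q.eval x / (2 * Real.sin (x / 2)) with hf
  -- factor q = X * r
  obtain ⟨r, hr⟩ : Polynomial.X ∣ q := by
    rw [Polynomial.X_dvd_iff, Polynomial.coeff_zero_eq_eval_zero, hq0]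
  have hqx : ∀ x : ℝ, q.eval x = x * r.eval x := by
    intro x; rw [hr]; simp
  -- bound on r on [0, π]
  obtain ⟨M, hM⟩ := isCompact_Icc.exists_bound_of_continuousOn
    (s := Set.Icc (0:ℝ) Real.pi) r.continuousOn
  -- bound on f
  have hfb : ∀ x ∈ Set.Ioc (0:ℝ) Real.pi, |f x| ≤ M * (Real.pi / 2) := by
    intro x hx
    have hx0 : 0 < x := hx.1
    have hxpi : x ≤ Real.pi := hx.2
    have hs : x / Real.pi ≤ Real.sin (x / 2) := by
      simpa using Real.mul_le_sin (x := x / 2) (by positivity) (by linarith)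
    have hspos : 0 < Real.sin (x / 2) :=
      lt_of_lt_of_le (by positivity) hs
    have hrM : |r.eval x| ≤ M := by
      have := hM x ⟨hx0.le, hxpi⟩
      simpa [Real.norm_eq_abs] using this
    have hM0 : 0 ≤ M := le_trans (abs_nonneg _) hrM
    show |q.eval x / (2 * Real.sin (x / 2))| ≤ M * (Real.pi / 2)
    rw [hqx x, abs_div, abs_mul]
    rw [div_le_iff₀ (by positivity : (0:ℝ) < |2 * Real.sin (x / 2)|)]
    have habs : |2 * Real.sin (x / 2)| = 2 * Real.sin (x / 2) := by
      rw [abs_of_pos (by positivity)]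
    rw [habs, abs_of_pos hx0]
    calc x * |r.eval x| ≤ x * M := by
          exact mul_le_mul_of_nonneg_left hrM hx0.le
      _ ≤ (M * (Real.pi / 2)) * (2 * (x / Real.pi)) := by
          rw [show (M * (Real.pi / 2)) * (2 * (x / Real.pi)) = x * M by
            field_simp]
      _ ≤ (M * (Real.pi / 2)) * (2 * Real.sin (x / 2)) := by
          apply mul_le_mul_of_nonneg_left _ (by positivity)
          linarith
  have hfmeas : Measurable f := by
    apply Measurable.div
    · exact q.continuous.measurable
    · exact (continuous_const.mul (Real.continuous_sin.comp
        (continuous_id.div_const 2))).measurable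
  -- integrability of x ↦ f x * sin (c * x) on (0, π]
  have hint : ∀ c : ℝ, IntegrableOn (fun x => f x * Real.sin (c * x))
      (Set.Ioc (0:ℝ) Real.pi) volume := by
    intro c
    apply Integrable.mono' (g := fun _ => M * (Real.pi / 2))
      (integrable_const _)
    · exact ((hfmeas.mul ((Real.continuous_sin.comp
        (continuous_const.mul continuous_id)).measurable)).aestronglyMeasurable)
    · filter_upwards [ae_restrict_mem measurableSet_Ioc] with x hx
      rw [Real.norm_eq_abs, abs_mul]
      calc |f x| * |Real.sin (c * x)| ≤ |f x| * 1 :=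
            mul_le_mul_of_nonneg_left (Real.abs_sin_le_one _) (abs_nonneg _)
        _ ≤ M * (Real.pi / 2) := by simpa using hfb x hx
  have hintI : ∀ c : ℝ, IntervalIntegrable (fun x => f x * Real.sin (c * x))
      volume 0 Real.pi := by
    intro c
    rw [intervalIntegrable_iff_integrableOn_Ioc_of_le Real.pi_pos.le]
    exact hint c
  have hqint : IntervalIntegrable (fun x => q.eval x) volume 0 Real.pi :=
    q.continuous.intervalIntegrable _ _
  -- key pointwise identity on [0, π]
  have key_eq : ∀ N : ℕ, ∀ x ∈ Set.Icc (0:ℝ) Real.pi,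
      q.eval x * ∑ k ∈ Finset.range N, Real.cos (((k : ℝ) + 1) * x)
        = f x * Real.sin (((N : ℝ) + 1 / 2) * x) - q.eval x / 2 := by
    intro N x hx
    rcases eq_or_lt_of_le hx.1 with h0 | h0
    · rw [← h0]
      simp [hf, hq0]
    · have hs : x / Real.pi ≤ Real.sin (x / 2) := by
        simpa using Real.mul_le_sin (x := x / 2) (by positivity) (by linarith [hx.2])
      have hspos : 0 < Real.sin (x / 2) := lt_of_lt_of_le (by positivity) hs
      have hd := dirichlet_aux N x
      show _ = q.eval x / (2 * Real.sin (x / 2)) * Real.sin (((N : ℝ) + 1 / 2) * x)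
        - q.eval x / 2
      have hstep : q.eval x / (2 * Real.sin (x / 2)) * Real.sin (((N : ℝ) + 1 / 2) * x)
          - q.eval x / 2
          = q.eval x * (Real.sin (((N : ℝ) + 1 / 2) * x) - Real.sin (x / 2))
            / (2 * Real.sin (x / 2)) := by
        field_simp
      rw [hstep, ← hd]
      field_simp
      ring_nf
      congr 1
      exact Finset.sum_congr rfl (fun k _ => by congr 1; ring)
  -- partial sums formula
  have key : ∀ N : ℕ, ∑ k ∈ Finset.range N, 1 / ((k : ℝ) + 1) ^ (2 * n)
      = (∫ x in (0:ℝ)..Real.pi, f x * Real.sin (((N : ℝ) + 1 / 2) * x))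
        - (1 / 2) * ∫ x in (0:ℝ)..Real.pi, q.eval x := by
    intro N
    have h1 : ∀ k ∈ Finset.range N, (1 : ℝ) / ((k : ℝ) + 1) ^ (2 * n)
        = ∫ x in (0:ℝ)..Real.pi, q.eval x * Real.cos (((k : ℝ) + 1) * x) := by
      intro k _
      have := hq (k + 1) (Nat.succ_pos k)
      push_cast at this
      rw [← this]
    rw [Finset.sum_congr rfl h1, ← intervalIntegral.integral_finset_sum]
    · have h2 : (∫ x in (0:ℝ)..Real.pi,
          ∑ k ∈ Finset.range N, q.eval x * Real.cos (((k : ℝ) + 1) * x))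
          = ∫ x in (0:ℝ)..Real.pi,
            (f x * Real.sin (((N : ℝ) + 1 / 2) * x) - q.eval x / 2) := by
        apply intervalIntegral.integral_congr
        intro x hx
        rw [Set.uIcc_of_le Real.pi_pos.le] at hx
        have := key_eq N x hx
        simp only [Finset.mul_sum] at this
        exact this
      rw [h2, intervalIntegral.integral_sub (hintI _)
        (hqint.div_const 2)]
      congr 1
      rw [intervalIntegral.integral_div]
      ring
    · intro k _
      exact (q.continuous.mul
        (Real.continuous_cos.comp (continuous_const.mul continuous_id))).intervalIntegrable _ _
  -- Riemann-Lebesgue: the oscillatory integrals tend to 0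
  have hRL : Tendsto (fun N : ℕ =>
      ∫ x in (0:ℝ)..Real.pi, f x * Real.sin (((N : ℝ) + 1 / 2) * x)) atTop (𝓝 0) := by
    set F : ℝ → ℂ := Set.indicator (Set.Ioc (0:ℝ) Real.pi) (fun x => (f x : ℂ)) with hF
    have hFint : Integrable F volume := by
      rw [hF, integrable_indicator_iff measurableSet_Ioc]
      apply Integrable.mono' (g := fun _ => M * (Real.pi / 2)) (integrable_const _)
      · exact (Complex.continuous_ofReal.measurable.comp hfmeas).aestronglyMeasurable
      · filter_upwards [ae_restrict_mem measurableSet_Ioc] with x hx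
        simpa [Complex.norm_real, Real.norm_eq_abs] using hfb x hx
    have h0 := Real.tendsto_integral_exp_smul_cocompact F
    have hw : Tendsto (fun N : ℕ => ((N : ℝ) + 1 / 2) / (2 * Real.pi)) atTop (cocompact ℝ) := by
      have hle : (atTop : Filter ℝ) ≤ cocompact ℝ := by
        rw [cocompact_eq_atBot_atTop]; exact le_sup_right
      apply Tendsto.mono_right _ hle
      apply Tendsto.atTop_div_const (by positivity)
      exact tendsto_atTop_add_const_right _ _ tendsto_natCast_atTop_atTop
    have h1 := h0.comp hw
    -- take imaginary parts
    have h2 : Tendsto (fun N : ℕ =>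
        (∫ v : ℝ, 𝐞 (-(v * (((N : ℝ) + 1 / 2) / (2 * Real.pi)))) • F v).im) atTop (𝓝 0) := by
      have := (Complex.continuous_im.tendsto 0).comp h1
      exact this
    have h3 : ∀ N : ℕ, (∫ v : ℝ, 𝐞 (-(v * (((N : ℝ) + 1 / 2) / (2 * Real.pi)))) • F v).im
        = -(∫ x in (0:ℝ)..Real.pi, f x * Real.sin (((N : ℝ) + 1 / 2) * x)) := by
      intro N
      set w : ℝ := ((N : ℝ) + 1 / 2) / (2 * Real.pi) with hwdef
      have hInt : Integrable (fun v : ℝ => 𝐞 (-(v * w)) • F v) volume := by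
        simp_rw [Circle.smul_def]
        apply Integrable.bdd_mul (c := 1) hFint
        · apply Continuous.aestronglyMeasurable
          exact continuous_subtype_val.comp
            (Real.continuous_fourierChar.comp (continuous_id.mul continuous_const).neg)
        · exact Filter.Eventually.of_forall (fun v => (Circle.norm_coe _).le)
      have him : ∀ v : ℝ, (𝐞 (-(v * w)) • F v).im
          = Set.indicator (Set.Ioc (0:ℝ) Real.pi)
              (fun x => -(Real.sin (((N : ℝ) + 1 / 2) * x) * f x)) v := by
        intro v
        by_cases hv : v ∈ Set.Ioc (0:ℝ) Real.pi
        · rw [hF, Set.indicator_of_mem hv, Set.indicator_of_mem hv,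
            Circle.smul_def, Real.fourierChar_apply]
          have hθ : (2 : ℝ) * Real.pi * -(v * w) = -(((N : ℝ) + 1 / 2) * v) := by
            rw [hwdef]
            field_simp
          rw [hθ]
          rw [smul_eq_mul, Complex.mul_im]
          simp only [Complex.ofReal_im, Complex.ofReal_re, Complex.exp_ofReal_mul_I_im,
            Complex.exp_ofReal_mul_I_re, mul_zero, zero_add, Real.sin_neg]
          ring
        · rw [hF, Set.indicator_of_notMem hv, Set.indicator_of_notMem hv]
          simp
      calc (∫ v : ℝ, 𝐞 (-(v * w)) • F v).im
          = ∫ v : ℝ, (𝐞 (-(v * w)) • F v).im := (integral_im hInt).symm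
        _ = ∫ v : ℝ, Set.indicator (Set.Ioc (0:ℝ) Real.pi)
              (fun x => -(Real.sin (((N : ℝ) + 1 / 2) * x) * f x)) v := by
            exact integral_congr_ae (Filter.Eventually.of_forall him)
        _ = ∫ x in Set.Ioc (0:ℝ) Real.pi, -(Real.sin (((N : ℝ) + 1 / 2) * x) * f x) := by
            rw [integral_indicator measurableSet_Ioc]
        _ = -(∫ x in Set.Ioc (0:ℝ) Real.pi, f x * Real.sin (((N : ℝ) + 1 / 2) * x)) := by
            rw [← integral_neg]
            exact integral_congr_ae (Filter.Eventually.of_forall (fun x => by ring))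
        _ = -(∫ x in (0:ℝ)..Real.pi, f x * Real.sin (((N : ℝ) + 1 / 2) * x)) := by
            rw [intervalIntegral.integral_of_le Real.pi_pos.le]
    have h4 : Tendsto (fun N : ℕ =>
        -(∫ x in (0:ℝ)..Real.pi, f x * Real.sin (((N : ℝ) + 1 / 2) * x))) atTop (𝓝 0) := by
      apply h2.congr
      intro N; rw [h3 N]
    simpa using h4.neg
  -- summability and conclusion
  have hsum : Summable (fun k : ℕ => 1 / ((k : ℝ) + 1) ^ (2 * n)) := by
    have h := (Real.summable_one_div_nat_pow (p := 2 * n)).mpr (by omega)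
    have h2 := (summable_nat_add_iff 1).mpr h
    apply h2.congr
    intro k
    push_cast
    ring_nf
  have hps := hsum.hasSum.tendsto_sum_nat
  have hps2 : Tendsto (fun N : ℕ => ∑ k ∈ Finset.range N, 1 / ((k : ℝ) + 1) ^ (2 * n))
      atTop (𝓝 (0 - (1 / 2) * ∫ x in (0:ℝ)..Real.pi, q.eval x)) := by
    apply Tendsto.congr (fun N => (key N).symm)
    exact hRL.sub_const _
  have := tendsto_nhds_unique hps hps2
  rw [this]
  ring
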